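/- arXiv:2004.11350 — 2 statements merged into one kernel-verified Lean document; each statement's English description precedes it below -/
import Mathlib

section
/- The center of the group G = {A ∈ SL(3,ℂ) : Aᴴ h A = h} is {ε·I₃ : ε ∈ ℂ, ε³ = 1}, which is isomorphic to ℤ/3ℤ. -/
open Matrix

noncomputable def hMat : Matrix (Fin 3) (Fin 3) ℂ :=
  !![0, 0, Complex.I; 0, 1, 0; -Complex.I, 0, 0]

/-- The carrier set of the group `G = {A ∈ SL(3,ℂ) : Aᴴ h A = h}`. -/
def Gset : Set (Matrix.SpecialLinearGroup (Fin 3) ℂ) :=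
  {A | (A : Matrix (Fin 3) (Fin 3) ℂ)ᴴ * hMat * (A : Matrix (Fin 3) (Fin 3) ℂ) = hMat}

noncomputable def scal (ε : ℂ) (hε : ε ^ 3 = 1) : Matrix.SpecialLinearGroup (Fin 3) ℂ :=
  ⟨ε • 1, by rw [Matrix.det_smul, Matrix.det_one, Fintype.card_fin, hε, mul_one]⟩

lemma mul_conj_self (ε : ℂ) (hε : ε ^ 3 = 1) : ε * (starRingEnd ℂ) ε = 1 := by
  have h3 : Complex.normSq ε ^ 3 = 1 := by
    rw [← map_pow Complex.normSq, hε]; simp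
  have h0 : 0 ≤ Complex.normSq ε := Complex.normSq_nonneg ε
  have hr : Complex.normSq ε = 1 := by
    nlinarith [sq_nonneg (Complex.normSq ε - 1), sq_nonneg (Complex.normSq ε + 1)]
  rw [Complex.mul_conj, hr, Complex.ofReal_one]

lemma scal_mem_Gset (ε : ℂ) (hε : ε ^ 3 = 1) : scal ε hε ∈ Gset := by
  show (ε • (1 : Matrix (Fin 3) (Fin 3) ℂ))ᴴ * hMat * (ε • (1 : Matrix (Fin 3) (Fin 3) ℂ)) = hMat
  simp only [Matrix.conjTranspose_smul, Matrix.conjTranspose_one, Matrix.smul_mul,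
    Matrix.mul_smul, one_mul, mul_one, smul_smul, Complex.star_def]
  rw [mul_conj_self ε hε, one_smul]

noncomputable def Dsl : Matrix.SpecialLinearGroup (Fin 3) ℂ :=
  ⟨!![2,0,0;0,1,0;0,0,1/2], by norm_num [Matrix.det_fin_three, Matrix.cons_val_two, Matrix.cons_val_one, Matrix.tail_cons, Matrix.head_cons, Matrix.vecHead, Matrix.vecTail]⟩

noncomputable def Ssl : Matrix.SpecialLinearGroup (Fin 3) ℂ :=
  ⟨!![0,0,-1;0,1,0;1,0,0], by norm_num [Matrix.det_fin_three, Matrix.cons_val_two, Matrix.cons_val_one, Matrix.tail_cons, Matrix.head_cons, Matrix.vecHead, Matrix.vecTail]⟩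

noncomputable def Usl : Matrix.SpecialLinearGroup (Fin 3) ℂ :=
  ⟨!![1,1,-Complex.I/2;0,1,-Complex.I;0,0,1],
    by norm_num [Matrix.det_fin_three, Matrix.vecHead, Matrix.vecTail, Function.comp, Matrix.cons_val_two, Matrix.cons_val_one, Matrix.tail_cons, Matrix.head_cons]⟩

lemma Dsl_mem : Dsl ∈ Gset := by
  show (!![(2:ℂ),0,0;0,1,0;0,0,1/2])ᴴ * hMat * !![(2:ℂ),0,0;0,1,0;0,0,1/2] = hMat
  ext i j
  fin_cases i <;> fin_cases j <;>
    simp [hMat, Matrix.mul_apply, Fin.sum_univ_three, Matrix.conjTranspose_apply,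
      Matrix.vecHead, Matrix.vecTail, Function.comp, map_ofNat] <;>
    norm_num [Complex.ext_iff, Complex.div_re, Complex.div_im, Complex.normSq]

lemma Ssl_mem : Ssl ∈ Gset := by
  show (!![(0:ℂ),0,-1;0,1,0;1,0,0])ᴴ * hMat * !![(0:ℂ),0,-1;0,1,0;1,0,0] = hMat
  ext i j
  fin_cases i <;> fin_cases j <;>
    simp [hMat, Matrix.mul_apply, Fin.sum_univ_three, Matrix.conjTranspose_apply,
      Matrix.vecHead, Matrix.vecTail, Function.comp, map_ofNat] <;>
    norm_num [Complex.ext_iff, Complex.div_re, Complex.div_im, Complex.normSq]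

lemma Usl_mem : Usl ∈ Gset := by
  show (!![(1:ℂ),1,-Complex.I/2;0,1,-Complex.I;0,0,1])ᴴ * hMat * !![(1:ℂ),1,-Complex.I/2;0,1,-Complex.I;0,0,1] = hMat
  ext i j
  fin_cases i <;> fin_cases j <;>
    simp [hMat, Matrix.mul_apply, Fin.sum_univ_three, Matrix.conjTranspose_apply,
      Matrix.vecHead, Matrix.vecTail, Function.comp, map_ofNat] <;>
    norm_num [Complex.ext_iff, Complex.div_re, Complex.div_im, Complex.normSq]

theorem stmt_1 (H : Subgroup (Matrix.SpecialLinearGroup (Fin 3) ℂ))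
    (hH : (H : Set (Matrix.SpecialLinearGroup (Fin 3) ℂ)) = Gset) :
    ((Subgroup.center H : Subgroup H) : Set H) =
      {A : H | ∃ ε : ℂ, ε ^ 3 = 1 ∧
        ((A : Matrix.SpecialLinearGroup (Fin 3) ℂ) : Matrix (Fin 3) (Fin 3) ℂ) = ε • (1 : Matrix (Fin 3) (Fin 3) ℂ)} ∧
    Nonempty (Subgroup.center H ≃* Multiplicative (ZMod 3)) := by
  have memH : ∀ A : Matrix.SpecialLinearGroup (Fin 3) ℂ, A ∈ H ↔ A ∈ Gset := by
    intro A; rw [← SetLike.mem_coe, hH]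
  have hD : Dsl ∈ H := (memH Dsl).2 Dsl_mem
  have hS : Ssl ∈ H := (memH Ssl).2 Ssl_mem
  have hU : Usl ∈ H := (memH Usl).2 Usl_mem
  have hset : ((Subgroup.center H : Subgroup H) : Set H) =
      {A : H | ∃ ε : ℂ, ε ^ 3 = 1 ∧
        ((A : Matrix.SpecialLinearGroup (Fin 3) ℂ) : Matrix (Fin 3) (Fin 3) ℂ) = ε • (1 : Matrix (Fin 3) (Fin 3) ℂ)} := by
    ext A
    simp only [SetLike.mem_coe, Set.mem_setOf_eq]
    constructor
    · intro hA
      set M : Matrix (Fin 3) (Fin 3) ℂ := ((A : Matrix.SpecialLinearGroup (Fin 3) ℂ) : Matrix (Fin 3) (Fin 3) ℂ) with hM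
      have comm : ∀ b : H, ((b * A : H) : Matrix.SpecialLinearGroup (Fin 3) ℂ).1
          = ((A * b : H) : Matrix.SpecialLinearGroup (Fin 3) ℂ).1 :=
        fun b => congrArg (fun x : H => (x : Matrix.SpecialLinearGroup (Fin 3) ℂ).1)
          (Subgroup.mem_center_iff.1 hA b)
      have eqD : !![(2:ℂ),0,0;0,1,0;0,0,1/2] * M = M * !![(2:ℂ),0,0;0,1,0;0,0,1/2] := comm ⟨Dsl, hD⟩
      have eqS : !![(0:ℂ),0,-1;0,1,0;1,0,0] * M = M * !![(0:ℂ),0,-1;0,1,0;1,0,0] := comm ⟨Ssl, hS⟩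
      have eqU : !![(1:ℂ),1,-Complex.I/2;0,1,-Complex.I;0,0,1] * M
          = M * !![(1:ℂ),1,-Complex.I/2;0,1,-Complex.I;0,0,1] := comm ⟨Usl, hU⟩
      have eD : ∀ i j, (!![(2:ℂ),0,0;0,1,0;0,0,1/2] * M) i j = (M * !![(2:ℂ),0,0;0,1,0;0,0,1/2]) i j :=
        fun i j => by rw [eqD]
      have eS : ∀ i j, (!![(0:ℂ),0,-1;0,1,0;1,0,0] * M) i j = (M * !![(0:ℂ),0,-1;0,1,0;1,0,0]) i j :=
        fun i j => by rw [eqS]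
      have eU : ∀ i j, (!![(1:ℂ),1,-Complex.I/2;0,1,-Complex.I;0,0,1] * M) i j
          = (M * !![(1:ℂ),1,-Complex.I/2;0,1,-Complex.I;0,0,1]) i j :=
        fun i j => by rw [eqU]
      have eD01 := eD 0 1; have eD02 := eD 0 2; have eD10 := eD 1 0
      have eD12 := eD 1 2; have eD20 := eD 2 0; have eD21 := eD 2 1
      have eS02 := eS 0 2; have eU01 := eU 0 1
      simp only [Matrix.mul_apply, Fin.sum_univ_three, Matrix.cons_val', Matrix.cons_val_zero,
        Matrix.cons_val_one, Matrix.head_cons, Matrix.empty_val', Matrix.cons_val_fin_one,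
        Matrix.head_fin_const, Matrix.cons_val_two, Matrix.tail_cons, Matrix.head_fin_const,
        Matrix.of_apply] at eD01 eD02 eD10 eD12 eD20 eD21 eS02 eU01
      have h01 : M 0 1 = 0 := by linear_combination eD01
      have h02 : M 0 2 = 0 := by linear_combination (2/3 : ℂ) * eD02
      have h10 : M 1 0 = 0 := by linear_combination -eD10
      have h12 : M 1 2 = 0 := by linear_combination 2 * eD12
      have h20 : M 2 0 = 0 := by linear_combination (-2/3 : ℂ) * eD20
      have h21 : M 2 1 = 0 := by linear_combination -2 * eD21
      have h11 : M 1 1 = M 0 0 := by linear_combination eU01 - Complex.I * eD21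
      have h22 : M 2 2 = M 0 0 := by linear_combination -eS02
      have hMeq : M = (M 0 0) • (1 : Matrix (Fin 3) (Fin 3) ℂ) := by
        ext i j
        fin_cases i <;> fin_cases j
        · show M 0 0 = (M 0 0 • (1 : Matrix (Fin 3) (Fin 3) ℂ)) 0 0
          simp [Matrix.one_apply]
        · show M 0 1 = (M 0 0 • (1 : Matrix (Fin 3) (Fin 3) ℂ)) 0 1
          simp [Matrix.one_apply, h01]
        · show M 0 2 = (M 0 0 • (1 : Matrix (Fin 3) (Fin 3) ℂ)) 0 2
          simp [Matrix.one_apply, h02]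
        · show M 1 0 = (M 0 0 • (1 : Matrix (Fin 3) (Fin 3) ℂ)) 1 0
          simp [Matrix.one_apply, h10]
        · show M 1 1 = (M 0 0 • (1 : Matrix (Fin 3) (Fin 3) ℂ)) 1 1
          simp [Matrix.one_apply, h11]
        · show M 1 2 = (M 0 0 • (1 : Matrix (Fin 3) (Fin 3) ℂ)) 1 2
          simp [Matrix.one_apply, h12]
        · show M 2 0 = (M 0 0 • (1 : Matrix (Fin 3) (Fin 3) ℂ)) 2 0
          simp [Matrix.one_apply, h20]
        · show M 2 1 = (M 0 0 • (1 : Matrix (Fin 3) (Fin 3) ℂ)) 2 1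
          simp [Matrix.one_apply, h21]
        · show M 2 2 = (M 0 0 • (1 : Matrix (Fin 3) (Fin 3) ℂ)) 2 2
          simp [Matrix.one_apply, h22]
      refine ⟨M 0 0, ?_, hMeq⟩
      have hdet : det M = 1 := (A : Matrix.SpecialLinearGroup (Fin 3) ℂ).2
      rw [hMeq, Matrix.det_smul, Matrix.det_one, Fintype.card_fin, mul_one] at hdet
      exact hdet
    · rintro ⟨ε, hε, hεA⟩
      rw [Subgroup.mem_center_iff]
      intro b
      refine Subtype.ext (Subtype.ext ?_)
      show (b : Matrix.SpecialLinearGroup (Fin 3) ℂ).1 * ((A : Matrix.SpecialLinearGroup (Fin 3) ℂ) : Matrix (Fin 3) (Fin 3) ℂ)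
        = ((A : Matrix.SpecialLinearGroup (Fin 3) ℂ) : Matrix (Fin 3) (Fin 3) ℂ) * (b : Matrix.SpecialLinearGroup (Fin 3) ℂ).1
      rw [hεA, Matrix.mul_smul, Matrix.smul_mul, one_mul, mul_one]
  refine ⟨hset, ?_⟩
  -- cardinality
  have hScalH : ∀ (ε : ℂ) (hε : ε ^ 3 = 1), scal ε hε ∈ H := fun ε hε => (memH _).2 (scal_mem_Gset ε hε)
  have hScalC : ∀ (ε : ℂ) (hε : ε ^ 3 = 1), (⟨scal ε hε, hScalH ε hε⟩ : H) ∈ Subgroup.center H := by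
    intro ε hε
    have : (⟨scal ε hε, hScalH ε hε⟩ : H) ∈ (Subgroup.center H : Set H) := by
      rw [hset]
      exact ⟨ε, hε, rfl⟩
    exact this
  let F : rootsOfUnity 3 ℂ → (Subgroup.center H) := fun ζ =>
    ⟨⟨scal (ζ : ℂˣ) (by
        have h := ζ.2
        rw [mem_rootsOfUnity] at h
        have h2 := congrArg (Units.val) h
        simpa using h2), hScalH _ _⟩, hScalC _ _⟩
  have hFinj : Function.Injective F := by
    intro x y hxy
    have h1 : ((((F x : H) : Matrix.SpecialLinearGroup (Fin 3) ℂ)) : Matrix (Fin 3) (Fin 3) ℂ)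
        = ((((F y : H) : Matrix.SpecialLinearGroup (Fin 3) ℂ)) : Matrix (Fin 3) (Fin 3) ℂ) := by rw [hxy]
    have h2 : ((x : ℂˣ) : ℂ) • (1 : Matrix (Fin 3) (Fin 3) ℂ) = ((y : ℂˣ) : ℂ) • 1 := h1
    have h3 := congrArg (fun X : Matrix (Fin 3) (Fin 3) ℂ => X 0 0) h2
    simp [Matrix.one_apply] at h3
    exact Subtype.ext (Units.ext h3)
  have hFsurj : Function.Surjective F := by
    intro x
    have hx : (x : H) ∈ (Subgroup.center H : Set H) := x.2
    rw [hset] at hx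
    obtain ⟨ε, hε, hεx⟩ := hx
    refine ⟨⟨Units.mkOfMulEqOne ε (ε ^ 2) (by rw [← pow_succ']; exact hε), ?_⟩, ?_⟩
    · rw [mem_rootsOfUnity]
      exact Units.ext (by simpa using hε)
    · refine Subtype.ext (Subtype.ext (Subtype.ext ?_))
      exact (hεx).symm
  have hc3 : Nat.card (Subgroup.center H) = 3 := by
    rw [Nat.card_congr (Equiv.ofBijective F ⟨hFinj, hFsurj⟩).symm,
      Complex.card_rootsOfUnity]
  haveI : Fact (Nat.Prime 3) := ⟨by norm_num⟩
  haveI hcyc : IsCyclic (Subgroup.center H) := isCyclic_of_prime_card hc3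
  have e2 : Multiplicative (ZMod (Nat.card (Subgroup.center H))) ≃* Multiplicative (ZMod 3) := by
    rw [hc3]
  exact ⟨(zmodCyclicMulEquiv hcyc).symm.trans e2⟩
end

section
/- If λ is an eigenvalue of H = iK with K having rows (iκ, -i, τ), (0, -2iκ, 1), (1, 0, iκ), and v_λ = (λ² - κλ - 2κ², -1, i(λ - 2κ)), then ⟨v_λ, v_λ⟩ = 1 - 8κ³ + 6κλ² - 2λ³, where ⟨z,w⟩ = zᴴ h w and h has entries h₁₃ = i, h₂₂ = 1, h₃₁ = -i, zeros elsewhere. -/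
open Matrix

noncomputable def hermForm (z w : Fin 3 → ℂ) : ℂ :=
  dotProduct (star z) (hMat.mulVec w)

theorem stmt_12 (κ τ lam : ℝ)
    (heig : -lam ^ 3 + (3 * κ ^ 2 - τ) * lam + 2 * κ ^ 3 + 2 * κ * τ - 1 = 0) :
    hermForm
        ![(lam : ℂ) ^ 2 - κ * lam - 2 * (κ : ℂ) ^ 2, -1, Complex.I * ((lam : ℂ) - 2 * κ)]
        ![(lam : ℂ) ^ 2 - κ * lam - 2 * (κ : ℂ) ^ 2, -1, Complex.I * ((lam : ℂ) - 2 * κ)] =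
      1 - 8 * (κ : ℂ) ^ 3 + 6 * κ * (lam : ℂ) ^ 2 - 2 * (lam : ℂ) ^ 3 := by
  simp only [hermForm, hMat, dotProduct, Matrix.mulVec, Fin.sum_univ_three,
    Matrix.cons_val_zero, Matrix.cons_val_one, Matrix.head_cons, Matrix.cons_val_two,
    Matrix.tail_cons, Pi.star_apply, Matrix.cons_mulVec, Matrix.cons_dotProduct,
    Matrix.empty_mulVec, RCLike.star_def, map_sub, _root_.map_mul, map_pow, map_neg, _root_.map_one,
    map_ofNat, Complex.conj_ofReal, Complex.conj_I]
  ring_nf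
  simp [Complex.I_sq, Matrix.vecHead, Matrix.vecTail, Complex.ext_iff]
  push_cast
  constructor <;> ring
end
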